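/- Let J and I be types, (X j)_{j ∈ J} and (Y i)_{i ∈ I} families of finite types with the discrete topology, and equip the products Π j, X j and Π i, Y i with their product topologies and Borel σ-algebras. Let κ be a Markov kernel from Π j, X j to Π i, Y i that is locally constant, i.e., for every clopen set U ⊆ Π i, Y i the map x ↦ κ x U is locally constant. Then for every finite set G : Finset I there exists a finite set F : Finset J such that the G-marginal of κ depends only on the F-coordinates of the input: Measure.map (fun y (i : G) => y i) (κ x) = Measure.map (fun y (i : G) => y i) (κ x') whenever x j = x' j for all j ∈ F. -/
import Mathlib


open MeasureTheory ProbabilityTheory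

/-- A locally constant function on a product of finite discrete spaces depends on only
finitely many coordinates. -/
lemma isLocallyConstant_factors_finset
    {J : Type*} {X : J → Type*}
    [∀ j, Finite (X j)] [∀ j, TopologicalSpace (X j)] [∀ j, DiscreteTopology (X j)]
    {α : Type*} {f : (∀ j, X j) → α} (hf : IsLocallyConstant f) :
    ∃ F : Finset J, ∀ x x' : ∀ j, X j, (∀ j ∈ F, x j = x' j) → f x = f x' := by
  classical
  haveI : ∀ j, CompactSpace (X j) := fun j => Finite.compactSpace
  have key : ∀ x : (∀ j, X j), ∃ F : Finset J,
      ∀ y, (∀ j ∈ F, y j = x j) → f y = f x := by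
    intro x
    have ho : IsOpen (f ⁻¹' {f x}) := hf {f x}
    rw [isOpen_pi_iff] at ho
    obtain ⟨F, u, hu, hsub⟩ := ho x rfl
    refine ⟨F, fun y hy => ?_⟩
    have : y ∈ (F : Set J).pi u := fun j hj => by
      rw [hy j hj]; exact (hu j hj).2
    exact hsub this
  choose F hF using key
  have hcover : Set.univ ⊆ ⋃ x : (∀ j, X j),
      (↑(F x) : Set J).pi (fun j => ({x j} : Set (X j))) := by
    intro y _
    exact Set.mem_iUnion.2 ⟨y, fun j _ => rfl⟩
  obtain ⟨t, ht⟩ := isCompact_univ.elim_finite_subcover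
    (fun x => (↑(F x) : Set J).pi (fun j => ({x j} : Set (X j))))
    (fun x => isOpen_set_pi (F x).finite_toSet (fun j _ => isOpen_discrete _)) hcover
  refine ⟨t.biUnion F, fun x x' hxx' => ?_⟩
  have hx := ht (Set.mem_univ x)
  rw [Set.mem_iUnion₂] at hx
  obtain ⟨x₀, hx₀t, hx₀⟩ := hx
  have hx₀' : ∀ j ∈ F x₀, x j = x₀ j := fun j hj => hx₀ j hj
  have h1 : f x = f x₀ := hF x₀ x hx₀'
  have h2 : f x' = f x₀ := hF x₀ x' (fun j hj => by
    rw [← hxx' j (Finset.mem_biUnion.2 ⟨x₀, hx₀t, hj⟩)]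
    exact hx₀' j hj)
  rw [h1, h2]

/-- For a locally constant Markov kernel between products of finite
discrete spaces (with Borel σ-algebras), every finite marginal of the kernel depends only
on finitely many coordinates of the input. -/
theorem marginal_of_locallyConstant_kernel_factors
    {J I : Type*} {X : J → Type*} {Y : I → Type*}
    [∀ j, Finite (X j)] [∀ j, TopologicalSpace (X j)] [∀ j, DiscreteTopology (X j)]
    [∀ j, MeasurableSpace (X j)] [∀ j, DiscreteMeasurableSpace (X j)]
    [BorelSpace (∀ j, X j)]
    [∀ i, Finite (Y i)] [∀ i, TopologicalSpace (Y i)] [∀ i, DiscreteTopology (Y i)]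
    [∀ i, MeasurableSpace (Y i)] [∀ i, DiscreteMeasurableSpace (Y i)]
    [BorelSpace (∀ i, Y i)]
    (κ : Kernel (∀ j, X j) (∀ i, Y i)) [IsMarkovKernel κ]
    (hκ : ∀ U : Set (∀ i, Y i), IsClopen U → IsLocallyConstant fun x => κ x U) :
    ∀ G : Finset I, ∃ F : Finset J, ∀ x x' : ∀ j, X j,
      (∀ j ∈ F, x j = x' j) →
        Measure.map (fun y (i : G) => y i) (κ x)
          = Measure.map (fun y (i : G) => y i) (κ x') := by
  classical
  intro G
  set r : (∀ i, Y i) → (∀ i : G, Y i) := fun y (i : G) => y i with hr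
  have hrmeas : Measurable r :=
    measurable_pi_lambda _ (fun i => measurable_pi_apply _)
  have hrcont : Continuous r :=
    continuous_pi (fun i => continuous_apply _)
  -- the target space is finite discrete
  haveI : Finite (∀ i : G, Y i) := by infer_instance
  -- for each point f of the target, the fiber r ⁻¹' {f} is clopen
  have hclopen : ∀ f : (∀ i : G, Y i), IsClopen (r ⁻¹' {f}) := by
    intro f
    exact (isClopen_discrete {f}).preimage hrcont
  -- hence x ↦ κ x (r ⁻¹' {f}) factors through a finite set of coordinates
  have key : ∀ f : (∀ i : G, Y i), ∃ F : Finset J, ∀ x x' : ∀ j, X j,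
      (∀ j ∈ F, x j = x' j) → κ x (r ⁻¹' {f}) = κ x' (r ⁻¹' {f}) :=
    fun f => isLocallyConstant_factors_finset (hκ _ (hclopen f))
  choose F hF using key
  haveI : Fintype (∀ i : G, Y i) := Fintype.ofFinite _
  refine ⟨Finset.univ.biUnion F, fun x x' hxx' => ?_⟩
  apply Measure.ext_of_singleton
  intro f
  rw [Measure.map_apply hrmeas (measurableSet_singleton f),
    Measure.map_apply hrmeas (measurableSet_singleton f)]
  exact hF f x x' (fun j hj =>
    hxx' j (Finset.mem_biUnion.2 ⟨f, Finset.mem_univ f, hj⟩))
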